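/- For all real numbers n₁, n₂ > 0 and β > 0, the point (γ₁*, γ₂*) with γ₁* = β·n₂^{1/4}/(n₁^{1/4} + n₂^{1/4}) and γ₂* = β·n₁^{1/4}/(n₁^{1/4} + n₂^{1/4}) is feasible (γ₁*, γ₂* > 0 and γ₁* + γ₂* = β) and minimizes the objective: for all γ₁ > 0, γ₂ > 0 with γ₁ + γ₂ = β, one has 1/(γ₁*·√n₁) + 1/(γ₂*·√n₂) ≤ 1/(γ₁·√n₁) + 1/(γ₂·√n₂). -/

import Mathlib

open Real

/-- For n₁, n₂ > 0 and β > 0, the point (γ₁*, γ₂*) with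
γ₁* = β·n₂^{1/4}/(n₁^{1/4} + n₂^{1/4}) and γ₂* = β·n₁^{1/4}/(n₁^{1/4} + n₂^{1/4})
is feasible and minimizes 1/(γ₁·√n₁) + 1/(γ₂·√n₂) subject to γ₁, γ₂ > 0, γ₁ + γ₂ = β. -/
theorem optimal_margin_tradeoff_feasible_and_minimizes
    (n₁ n₂ β : ℝ) (hn₁ : 0 < n₁) (hn₂ : 0 < n₂) (hβ : 0 < β) :
    0 < β * n₂ ^ ((1 : ℝ) / 4) / (n₁ ^ ((1 : ℝ) / 4) + n₂ ^ ((1 : ℝ) / 4)) ∧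
    0 < β * n₁ ^ ((1 : ℝ) / 4) / (n₁ ^ ((1 : ℝ) / 4) + n₂ ^ ((1 : ℝ) / 4)) ∧
    β * n₂ ^ ((1 : ℝ) / 4) / (n₁ ^ ((1 : ℝ) / 4) + n₂ ^ ((1 : ℝ) / 4)) +
      β * n₁ ^ ((1 : ℝ) / 4) / (n₁ ^ ((1 : ℝ) / 4) + n₂ ^ ((1 : ℝ) / 4)) = β ∧
    ∀ γ₁ γ₂ : ℝ, 0 < γ₁ → 0 < γ₂ → γ₁ + γ₂ = β →
      1 / (β * n₂ ^ ((1 : ℝ) / 4) / (n₁ ^ ((1 : ℝ) / 4) + n₂ ^ ((1 : ℝ) / 4)) * Real.sqrt n₁) +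
        1 / (β * n₁ ^ ((1 : ℝ) / 4) / (n₁ ^ ((1 : ℝ) / 4) + n₂ ^ ((1 : ℝ) / 4)) * Real.sqrt n₂) ≤
      1 / (γ₁ * Real.sqrt n₁) + 1 / (γ₂ * Real.sqrt n₂) := by
  set a := n₁ ^ ((1 : ℝ) / 4) with ha_def
  set b := n₂ ^ ((1 : ℝ) / 4) with hb_def
  have ha : 0 < a := Real.rpow_pos_of_pos hn₁ _
  have hb : 0 < b := Real.rpow_pos_of_pos hn₂ _
  have hab : 0 < a + b := by linarith
  have hs₁ : Real.sqrt n₁ = a ^ 2 := by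
    rw [ha_def, ← Real.rpow_natCast (n₁ ^ ((1:ℝ)/4)) 2, ← Real.rpow_mul hn₁.le,
      Real.sqrt_eq_rpow]
    norm_num
  have hs₂ : Real.sqrt n₂ = b ^ 2 := by
    rw [hb_def, ← Real.rpow_natCast (n₂ ^ ((1:ℝ)/4)) 2, ← Real.rpow_mul hn₂.le,
      Real.sqrt_eq_rpow]
    norm_num
  refine ⟨by positivity, by positivity, by field_simp; ring, ?_⟩
  intro γ₁ γ₂ hγ₁ hγ₂ hsum
  rw [hs₁, hs₂]
  have hL : 1 / (β * b / (a + b) * a ^ 2) + 1 / (β * a / (a + b) * b ^ 2)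
      = (a + b) ^ 2 / (β * a ^ 2 * b ^ 2) := by
    field_simp
    ring
  have hR : 1 / (γ₁ * a ^ 2) + 1 / (γ₂ * b ^ 2)
      = (γ₂ * b ^ 2 + γ₁ * a ^ 2) / (γ₁ * γ₂ * a ^ 2 * b ^ 2) := by
    field_simp
  rw [hL, hR, div_le_div_iff₀ (by positivity) (by positivity)]
  subst hsum
  nlinarith [mul_nonneg (sq_nonneg (a * b)) (sq_nonneg (γ₁ * a - γ₂ * b))]
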